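/- Let d ≥ 1. The second-order commutant of the unitary group equals the span of the identity and the Flip: an operator Q on ℂ^d ⊗ ℂ^d satisfies Q · (U ⊗ U) = (U ⊗ U) · Q for every U ∈ U(d) if and only if Q is a complex linear combination of 𝕀 and 𝔽. -/

import Mathlib

open Matrix
open scoped Kronecker

/-- The Flip (SWAP) operator `𝔽` on `ℂ^d ⊗ ℂ^d`, with entries
`𝔽_{(i,j),(k,l)} = 1` if `i = l` and `j = k`, and `0` otherwise. -/
def flipOp (d : ℕ) : Matrix (Fin d × Fin d) (Fin d × Fin d) ℂ :=
  Matrix.of fun p q => if p.1 = q.2 ∧ p.2 = q.1 then 1 else 0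

namespace CommutantTwoAux

private lemma sum_eq_pair {α : Type*} [Fintype α] [DecidableEq α] (f : α → ℂ) (r₁ r₂ : α)
    (h12 : r₁ ≠ r₂) (h : ∀ r, r ≠ r₁ → r ≠ r₂ → f r = 0) :
    ∑ r, f r = f r₁ + f r₂ := by
  rw [← Finset.sum_pair h12]
  exact (Finset.sum_subset (Finset.subset_univ _) (fun x _ hx => by
    simp only [Finset.mem_insert, Finset.mem_singleton, not_or] at hx
    exact h x hx.1 hx.2)).symm

private lemma I_count {a b c e : Prop} [Decidable a] [Decidable b] [Decidable c] [Decidable e]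
    (h : (if a then Complex.I else 1) * (if b then Complex.I else 1) =
         (if c then Complex.I else 1) * (if e then Complex.I else 1)) :
    ((if a then 1 else 0) + (if b then 1 else 0) : ℕ)
      = (if c then 1 else 0) + (if e then 1 else 0) := by
  split_ifs at h ⊢ <;> simp_all [Complex.ext_iff] <;> norm_num at h

private lemma count_pair {d : ℕ} (i j k l : Fin d)
    (key : ∀ m : Fin d, ((if i = m then 1 else 0) + (if j = m then 1 else 0) : ℕ) =
      (if k = m then 1 else 0) + (if l = m then 1 else 0)) :
    (k = i ∧ l = j) ∨ (k = j ∧ l = i) := by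
  by_cases eij : i = j
  · subst eij
    have h1 := key i
    rw [if_pos rfl] at h1
    split_ifs at h1 with hk hl <;> first | exact Or.inl ⟨‹k = i›, ‹l = i›⟩ | omega
  · have h1 := key i
    have h2 := key j
    rw [if_pos rfl, if_neg (Ne.symm eij)] at h1
    rw [if_neg eij, if_pos rfl] at h2
    by_cases hki : k = i
    · rw [if_pos hki] at h1
      have hkj : ¬ k = j := fun h => eij (hki.symm.trans h)
      rw [if_neg hkj] at h2
      by_cases hlj : l = j
      · exact Or.inl ⟨hki, hlj⟩
      · rw [if_neg hlj] at h2; omega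
    · rw [if_neg hki] at h1
      by_cases hli : l = i
      · by_cases hkj : k = j
        · exact Or.inr ⟨hkj, hli⟩
        · rw [if_neg hkj] at h2
          have hlj : ¬ l = j := fun h => eij (hli.symm.trans h)
          rw [if_neg hlj] at h2; omega
      · rw [if_neg hli] at h1; omega

private lemma diagI_mem {d : ℕ} (m : Fin d) :
    Matrix.diagonal (fun x => if x = m then Complex.I else 1) ∈ Matrix.unitaryGroup (Fin d) ℂ := by
  rw [Matrix.mem_unitaryGroup_iff, Matrix.star_eq_conjTranspose, Matrix.diagonal_conjTranspose,
    Matrix.diagonal_mul_diagonal]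
  ext x y
  by_cases hxy : x = y
  · subst hxy
    by_cases hx : x = m <;> simp [Matrix.diagonal_apply_eq, hx, Complex.ext_iff]
  · simp [Matrix.diagonal_apply_ne _ hxy, Matrix.one_apply_ne hxy]

variable {d : ℕ} (Q : Matrix (Fin d × Fin d) (Fin d × Fin d) ℂ)

private lemma zero_pattern
    (hQ : ∀ U : Matrix.unitaryGroup (Fin d) ℂ,
        Q * ((U : Matrix (Fin d) (Fin d) ℂ) ⊗ₖ (U : Matrix (Fin d) (Fin d) ℂ)) =
          ((U : Matrix (Fin d) (Fin d) ℂ) ⊗ₖ (U : Matrix (Fin d) (Fin d) ℂ)) * Q)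
    (i j k l : Fin d) (h12 : ¬((k = i ∧ l = j) ∨ (k = j ∧ l = i))) :
    Q (i, j) (k, l) = 0 := by
  by_contra hne
  apply h12
  apply count_pair
  intro m
  apply I_count
  have hcomm := hQ ⟨_, diagI_mem m⟩
  rw [Matrix.diagonal_kronecker_diagonal] at hcomm
  have he := Matrix.ext_iff.mpr hcomm (i, j) (k, l)
  rw [Matrix.mul_diagonal, Matrix.diagonal_mul] at he
  exact (mul_left_cancel₀ hne (he.trans (mul_comm _ _))).symm

lemma equiv_toPEquiv_toMatrix {n : Type*} [DecidableEq n] {α : Type*} [Zero α] [One α]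
    (σ : n ≃ n) (i j : n) :
    (σ.toPEquiv.toMatrix : Matrix n n α) i j = (1 : Matrix n n α) (σ i) j := by
  simp [PEquiv.toMatrix_apply, Matrix.one_apply]

private lemma permMat_star {n : Type*} [Fintype n] [DecidableEq n] (σ : Equiv.Perm n) :
    star (σ.toPEquiv.toMatrix : Matrix n n ℂ) = (σ⁻¹.toPEquiv.toMatrix : Matrix n n ℂ) := by
  ext x y
  rw [Matrix.star_eq_conjTranspose, Matrix.conjTranspose_apply]
  rw [equiv_toPEquiv_toMatrix, equiv_toPEquiv_toMatrix]
  rw [Matrix.one_apply, Matrix.one_apply]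
  have : σ y = x ↔ σ⁻¹ x = y := by
    constructor
    · intro h; rw [← h]; simp
    · intro h; rw [← h]; simp
  split_ifs with h1 h2 h2 <;> simp_all

private lemma permMat_mem {n : Type*} [Fintype n] [DecidableEq n] (σ : Equiv.Perm n) :
    (σ.toPEquiv.toMatrix : Matrix n n ℂ) ∈ Matrix.unitaryGroup n ℂ := by
  rw [Matrix.mem_unitaryGroup_iff, permMat_star, ← PEquiv.toMatrix_trans, ← Equiv.toPEquiv_trans]
  rw [Equiv.Perm.inv_def, Equiv.self_trans_symm, Equiv.toPEquiv_refl, PEquiv.toMatrix_refl]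

private lemma permMat_kron {n : Type*} [Fintype n] [DecidableEq n] (σ : Equiv.Perm n) :
    (σ.toPEquiv.toMatrix : Matrix n n ℂ) ⊗ₖ (σ.toPEquiv.toMatrix : Matrix n n ℂ)
      = ((σ.prodCongr σ).toPEquiv.toMatrix : Matrix (n × n) (n × n) ℂ) := by
  ext p q
  rw [Matrix.kroneckerMap_apply, equiv_toPEquiv_toMatrix, equiv_toPEquiv_toMatrix,
    equiv_toPEquiv_toMatrix]
  rw [Matrix.one_apply, Matrix.one_apply, Matrix.one_apply]
  by_cases h1 : σ p.1 = q.1 <;> by_cases h2 : σ p.2 = q.2 <;>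
    simp [Equiv.prodCongr_apply, Prod.ext_iff, h1, h2]

private lemma perm_inv
    (hQ : ∀ U : Matrix.unitaryGroup (Fin d) ℂ,
        Q * ((U : Matrix (Fin d) (Fin d) ℂ) ⊗ₖ (U : Matrix (Fin d) (Fin d) ℂ)) =
          ((U : Matrix (Fin d) (Fin d) ℂ) ⊗ₖ (U : Matrix (Fin d) (Fin d) ℂ)) * Q)
    (σ : Equiv.Perm (Fin d)) (p q : Fin d × Fin d) :
    Q (σ p.1, σ p.2) (σ q.1, σ q.2) = Q p q := by
  have hcomm := hQ ⟨_, permMat_mem σ⟩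
  rw [permMat_kron] at hcomm
  rw [PEquiv.mul_toMatrix_toPEquiv, PEquiv.toMatrix_toPEquiv_mul] at hcomm
  have := Matrix.ext_iff.mpr hcomm p ((σ.prodCongr σ) q)
  rw [Matrix.submatrix_apply, Matrix.submatrix_apply, Equiv.symm_apply_apply, id] at this
  exact this.symm.trans rfl

private lemma exists_perm (i j k l : Fin d) (hij : i ≠ j) (hkl : k ≠ l) :
    ∃ σ : Equiv.Perm (Fin d), σ i = k ∧ σ j = l := by
  classical
  set σ₁ := Equiv.swap i k with hσ₁
  have hji : σ₁ j ≠ k := by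
    intro h
    have : j = i := σ₁.injective (h.trans (Equiv.swap_apply_left i k).symm)
    exact (hij this.symm).elim
  refine ⟨σ₁.trans (Equiv.swap (σ₁ j) l), ?_, ?_⟩
  · simp only [Equiv.trans_apply]
    rw [Equiv.swap_apply_left]
    exact Equiv.swap_apply_of_ne_of_ne hji.symm hkl
  · simp only [Equiv.trans_apply]
    exact Equiv.swap_apply_left _ _

noncomputable def hadC : ℂ := ((Real.sqrt 2)⁻¹ : ℝ)

lemma hadC_mul : hadC * hadC = 1 / 2 := by
  rw [hadC, ← Complex.ofReal_mul]
  have h2 : Real.sqrt 2 * Real.sqrt 2 = 2 := Real.mul_self_sqrt (by norm_num)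
  have : (Real.sqrt 2)⁻¹ * (Real.sqrt 2)⁻¹ = 1/2 := by field_simp; rw [sq, h2]
  rw [this]; norm_num

lemma hadC_conj : (starRingEnd ℂ) hadC = hadC := Complex.conj_ofReal _

noncomputable def hadM (z0 z1 : Fin d) : Matrix (Fin d) (Fin d) ℂ :=
  Matrix.of fun x y =>
    if x = z0 then (if y = z0 then hadC else if y = z1 then hadC else 0)
    else if x = z1 then (if y = z0 then hadC else if y = z1 then -hadC else 0)
    else if x = y then 1 else 0

variable (z0 z1 : Fin d)

lemma hadM_conj (x y : Fin d) : star (hadM z0 z1 x y) = hadM z0 z1 x y := by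
  rw [hadM]
  simp only [Matrix.of_apply, Complex.star_def]
  split_ifs <;> simp [hadC_conj]

lemma hadM_e00 : hadM z0 z1 z0 z0 = hadC := by rw [hadM]; simp
lemma hadM_e01 (hz : z0 ≠ z1) : hadM z0 z1 z0 z1 = hadC := by
  rw [hadM]; simp [hz, Ne.symm hz]
lemma hadM_e10 (hz : z0 ≠ z1) : hadM z0 z1 z1 z0 = hadC := by
  rw [hadM]; simp [hz, Ne.symm hz]
lemma hadM_e11 (hz : z0 ≠ z1) : hadM z0 z1 z1 z1 = -hadC := by
  rw [hadM]; simp [hz, Ne.symm hz]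
lemma hadM_row0 (z : Fin d) (h0 : z ≠ z0) (h1 : z ≠ z1) : hadM z0 z1 z0 z = 0 := by
  rw [hadM]; simp [h0, h1]
lemma hadM_row1 (hz : z0 ≠ z1) (z : Fin d) (h0 : z ≠ z0) (h1 : z ≠ z1) : hadM z0 z1 z1 z = 0 := by
  rw [hadM]; simp [Ne.symm hz, h0, h1]
lemma hadM_rowo (x : Fin d) (h0 : x ≠ z0) (h1 : x ≠ z1) (z : Fin d) :
    hadM z0 z1 x z = if x = z then 1 else 0 := by
  rw [hadM]; simp [h0, h1]

lemma hadM_mem (hz : z0 ≠ z1) : hadM z0 z1 ∈ Matrix.unitaryGroup (Fin d) ℂ := by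
  rw [Matrix.mem_unitaryGroup_iff]
  ext x y
  rw [Matrix.mul_apply]
  have hst : ∀ z, star (hadM z0 z1) z y = hadM z0 z1 y z := fun z => by
    rw [Matrix.star_eq_conjTranspose, Matrix.conjTranspose_apply, hadM_conj]
  simp only [hst]
  have hz' : z1 ≠ z0 := Ne.symm hz
  by_cases hx0 : z0 = x <;> by_cases hx1 : z1 = x
  · exact absurd (hx0.trans hx1.symm) hz
  · subst hx0
    by_cases hy0 : z0 = y <;> by_cases hy1 : z1 = y
    · exact absurd (hy0.trans hy1.symm) hz
    · subst hy0
      rw [sum_eq_pair _ z0 z1 hz (fun r h0 h1 => by rw [hadM_row0 _ _ _ h0 h1, zero_mul])]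
      rw [hadM_e00, hadM_e01 _ _ hz, Matrix.one_apply_eq]
      linear_combination 2 * hadC_mul
    · subst hy1
      rw [sum_eq_pair _ z0 z1 hz (fun r h0 h1 => by rw [hadM_row0 _ _ _ h0 h1, zero_mul])]
      rw [hadM_e00, hadM_e01 _ _ hz, hadM_e10 _ _ hz, hadM_e11 _ _ hz,
        Matrix.one_apply_ne hz]
      ring
    · rw [Finset.sum_eq_zero, Matrix.one_apply_ne hy0]
      intro z _
      rw [hadM_rowo _ _ y (fun h => hy0 h.symm) (fun h => hy1 h.symm) z]
      by_cases hzz : y = z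
      · rw [if_pos hzz, mul_one, ← hzz,
          hadM_row0 _ _ y (fun h => hy0 h.symm) (fun h => hy1 h.symm)]
      · rw [if_neg hzz, mul_zero]
  · subst hx1
    by_cases hy0 : z0 = y <;> by_cases hy1 : z1 = y
    · exact absurd (hy0.trans hy1.symm) hz
    · subst hy0
      rw [sum_eq_pair _ z0 z1 hz (fun r h0 h1 => by rw [hadM_row1 _ _ hz _ h0 h1, zero_mul])]
      rw [hadM_e00, hadM_e01 _ _ hz, hadM_e10 _ _ hz, hadM_e11 _ _ hz,
        Matrix.one_apply_ne hz']
      ring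
    · subst hy1
      rw [sum_eq_pair _ z0 z1 hz (fun r h0 h1 => by rw [hadM_row1 _ _ hz _ h0 h1, zero_mul])]
      rw [hadM_e10 _ _ hz, hadM_e11 _ _ hz, Matrix.one_apply_eq]
      linear_combination 2 * hadC_mul
    · rw [Finset.sum_eq_zero, Matrix.one_apply_ne hy1]
      intro z _
      rw [hadM_rowo _ _ y (fun h => hy0 h.symm) (fun h => hy1 h.symm) z]
      by_cases hzz : y = z
      · rw [if_pos hzz, mul_one, ← hzz,
          hadM_row1 _ _ hz y (fun h => hy0 h.symm) (fun h => hy1 h.symm)]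
      · rw [if_neg hzz, mul_zero]
  · have hx0' : x ≠ z0 := fun h => hx0 h.symm
    have hx1' : x ≠ z1 := fun h => hx1 h.symm
    by_cases hy0 : z0 = y <;> by_cases hy1 : z1 = y
    · exact absurd (hy0.trans hy1.symm) hz
    · subst hy0
      rw [Finset.sum_eq_zero, Matrix.one_apply_ne hx0']
      intro z _
      rw [hadM_rowo _ _ x hx0' hx1' z]
      by_cases hzz : x = z
      · rw [if_pos hzz, one_mul, ← hzz, hadM_row0 _ _ x hx0' hx1']
      · rw [if_neg hzz, zero_mul]
    · subst hy1
      rw [Finset.sum_eq_zero, Matrix.one_apply_ne hx1']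
      intro z _
      rw [hadM_rowo _ _ x hx0' hx1' z]
      by_cases hzz : x = z
      · rw [if_pos hzz, one_mul, ← hzz, hadM_row1 _ _ hz x hx0' hx1']
      · rw [if_neg hzz, zero_mul]
    · rw [Fintype.sum_eq_single x
        (fun z hzx => by rw [hadM_rowo _ _ x hx0' hx1' z, if_neg (fun h => hzx h.symm), zero_mul])]
      rw [hadM_rowo _ _ x hx0' hx1' x, if_pos rfl, one_mul,
        hadM_rowo _ _ y (fun h => hy0 h.symm) (fun h => hy1 h.symm) x]
      by_cases hxy : x = y
      · rw [if_pos hxy.symm, hxy, Matrix.one_apply_eq]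
      · rw [if_neg (fun h => hxy h.symm), Matrix.one_apply_ne hxy]

private lemma had_rel
    (hQ : ∀ U : Matrix.unitaryGroup (Fin d) ℂ,
        Q * ((U : Matrix (Fin d) (Fin d) ℂ) ⊗ₖ (U : Matrix (Fin d) (Fin d) ℂ)) =
          ((U : Matrix (Fin d) (Fin d) ℂ) ⊗ₖ (U : Matrix (Fin d) (Fin d) ℂ)) * Q)
    (hz : z0 ≠ z1) :
    Q (z0, z0) (z0, z0) = Q (z0, z1) (z0, z1) + Q (z0, z1) (z1, z0) := by
  have hQ' : ∀ U : Matrix (Fin d) (Fin d) ℂ, U ∈ Matrix.unitaryGroup (Fin d) ℂ →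
      Q * (U ⊗ₖ U) = (U ⊗ₖ U) * Q := fun U hU => hQ ⟨U, hU⟩
  have he := Matrix.ext_iff.mpr (hQ' _ (hadM_mem z0 z1 hz)) (z0, z1) (z0, z0)
  rw [Matrix.mul_apply, Matrix.mul_apply] at he
  have hpairne : ((z0, z1) : Fin d × Fin d) ≠ (z1, z0) := fun h => hz (congrArg Prod.fst h)
  rw [sum_eq_pair _ ((z0, z1) : Fin d × Fin d) ((z1, z0) : Fin d × Fin d) hpairne
    (fun r hr1 hr2 => by
      have hz0 : Q (z0, z1) (r.1, r.2) = 0 := by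
        refine zero_pattern Q hQ z0 z1 r.1 r.2 ?_
        rintro (⟨ha, hb⟩ | ⟨ha, hb⟩)
        · exact hr1 (Prod.ext_iff.mpr ⟨ha, hb⟩)
        · exact hr2 (Prod.ext_iff.mpr ⟨ha, hb⟩)
      rw [show ((r.1, r.2) : Fin d × Fin d) = r from rfl] at hz0
      rw [hz0, zero_mul])] at he
  rw [Fintype.sum_eq_single ((z0, z0) : Fin d × Fin d)
    (fun r hr => by
      have hz0 : Q (r.1, r.2) (z0, z0) = 0 := by
        refine zero_pattern Q hQ r.1 r.2 z0 z0 ?_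
        rintro (⟨ha, hb⟩ | ⟨ha, hb⟩)
        · exact hr (Prod.ext_iff.mpr ⟨ha.symm, hb.symm⟩)
        · exact hr (Prod.ext_iff.mpr ⟨hb.symm, ha.symm⟩)
      rw [show ((r.1, r.2) : Fin d × Fin d) = r from rfl] at hz0
      rw [hz0, mul_zero])] at he
  simp only [Matrix.kroneckerMap_apply] at he
  rw [hadM_e00, hadM_e10 _ _ hz] at he
  rw [hadC_mul] at he
  linear_combination (-2 : ℂ) * he

end CommutantTwoAux

open CommutantTwoAux in
/-- The second-order commutant of the unitary group is the span of the
identity and the Flip: `Q` commutes with `U ⊗ U` for every unitary `U` if and only if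
`Q` is a complex linear combination of `𝕀` and `𝔽`. -/
theorem commutant_two_eq_span_id_flip {d : ℕ} (hd : 1 ≤ d)
    (Q : Matrix (Fin d × Fin d) (Fin d × Fin d) ℂ) :
    (∀ U : Matrix.unitaryGroup (Fin d) ℂ,
        Q * ((U : Matrix (Fin d) (Fin d) ℂ) ⊗ₖ (U : Matrix (Fin d) (Fin d) ℂ)) =
          ((U : Matrix (Fin d) (Fin d) ℂ) ⊗ₖ (U : Matrix (Fin d) (Fin d) ℂ)) * Q) ↔
      ∃ a b : ℂ, Q = a • (1 : Matrix (Fin d × Fin d) (Fin d × Fin d) ℂ) + b • flipOp d := by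
  constructor
  · intro hQ
    by_cases hd2 : 2 ≤ d
    · set z0 : Fin d := ⟨0, by omega⟩ with hz0
      set z1 : Fin d := ⟨1, by omega⟩ with hz1
      have hz : z0 ≠ z1 := by simp [hz0, hz1, Fin.ext_iff]
      refine ⟨Q (z0, z1) (z0, z1), Q (z0, z1) (z1, z0), ?_⟩
      ext p q
      obtain ⟨i, j⟩ := p
      obtain ⟨k, l⟩ := q
      rw [Matrix.add_apply, Matrix.smul_apply, Matrix.smul_apply, Matrix.one_apply,
        flipOp, Matrix.of_apply, smul_eq_mul, smul_eq_mul]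
      by_cases h1 : k = i ∧ l = j
      · obtain ⟨hk, hl⟩ := h1
        rw [hk, hl]
        by_cases hij : i = j
        · rw [hij]
          rw [if_pos rfl, if_pos ⟨rfl, rfl⟩, mul_one, mul_one]
          have hswap := perm_inv Q hQ (Equiv.swap z0 j) (z0, z0) (z0, z0)
          rw [Equiv.swap_apply_left] at hswap
          rw [hswap]
          exact had_rel Q z0 z1 hQ hz
        · rw [if_pos rfl, if_neg (fun h => hij h.1), mul_one, mul_zero, add_zero]
          obtain ⟨σ, hσ0, hσ1⟩ := exists_perm z0 z1 i j hz hij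
          have := perm_inv Q hQ σ (z0, z1) (z0, z1)
          simp only [hσ0, hσ1] at this
          exact this
      · by_cases h2 : k = j ∧ l = i
        · obtain ⟨hk, hl⟩ := h2
          rw [hk, hl]
          have hij : i ≠ j := fun h => h1 ⟨hk.trans h.symm, hl.trans h⟩
          rw [if_neg (fun h => hij (congrArg Prod.fst h)),
            if_pos ⟨rfl, rfl⟩, mul_zero, zero_add, mul_one]
          obtain ⟨σ, hσ0, hσ1⟩ := exists_perm z0 z1 i j hz hij
          have := perm_inv Q hQ σ (z0, z1) (z1, z0)
          simp only [hσ0, hσ1] at this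
          exact this
        · rw [if_neg (fun h => h1 ⟨(congrArg Prod.fst h).symm, (congrArg Prod.snd h).symm⟩),
            if_neg (fun h => h2 ⟨h.2.symm, h.1.symm⟩), mul_zero, mul_zero, add_zero]
          exact zero_pattern Q hQ i j k l (fun h => h.elim (fun h => h1 h) (fun h => h2 h))
    · have hd1 : d = 1 := by omega
      subst hd1
      refine ⟨Q (0, 0) (0, 0), 0, ?_⟩
      ext p q
      have hp : p = ((0 : Fin 1), (0 : Fin 1)) := Subsingleton.elim _ _
      have hq : q = ((0 : Fin 1), (0 : Fin 1)) := Subsingleton.elim _ _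
      subst hp; subst hq
      simp [Matrix.one_apply, flipOp]
  · rintro ⟨a, b, rfl⟩ U
    have hF : flipOp d = ((Equiv.prodComm (Fin d) (Fin d)).toPEquiv.toMatrix :
        Matrix (Fin d × Fin d) (Fin d × Fin d) ℂ) := by
      ext p q
      rw [flipOp, Matrix.of_apply, equiv_toPEquiv_toMatrix, Matrix.one_apply]
      refine if_congr ?_ rfl rfl
      rw [Prod.ext_iff]
      exact ⟨fun h => ⟨h.2, h.1⟩, fun h => ⟨h.2, h.1⟩⟩
    have hcomm : flipOp d * ((U : Matrix (Fin d) (Fin d) ℂ) ⊗ₖ (U : Matrix (Fin d) (Fin d) ℂ))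
        = ((U : Matrix (Fin d) (Fin d) ℂ) ⊗ₖ (U : Matrix (Fin d) (Fin d) ℂ)) * flipOp d := by
      rw [hF, PEquiv.toMatrix_toPEquiv_mul, PEquiv.mul_toMatrix_toPEquiv]
      ext p q
      rw [Matrix.submatrix_apply, Matrix.submatrix_apply, id_eq,
        Matrix.kroneckerMap_apply, Matrix.kroneckerMap_apply]
      exact mul_comm _ _
    rw [add_mul, mul_add, smul_mul_assoc, smul_mul_assoc, one_mul,
      mul_smul_comm, mul_smul_comm, mul_one, hcomm]
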